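/- Let H be a Hopf algebra over a commutative ring k and R an H-module algebra. Then the set r_Hn(R) := { a ∈ R : every element of the H-ideal of R generated by a is H-regular } is an H-ideal of R; in particular it is closed under subtraction, satisfies R·r_Hn(R) ⊆ r_Hn(R) and r_Hn(R)·R ⊆ r_Hn(R), and h · r_Hn(R) ⊆ r_Hn(R) for all h ∈ H. -/

import Mathlib

set_option linter.unusedSectionVars false

open scoped TensorProduct

variable {k H R : Type*} [CommRing k] [Ring H] [HopfAlgebra k H]
  [NonUnitalRing R] [Module k R] [SMulCommClass k R R] [IsScalarTower k R R]

/-- `R` is an `H`-module algebra via the `k`-bilinear action `act`: the action is unital,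
makes `R` a left `H`-module, and satisfies `h · (a b) = ∑ (h₁ · a)(h₂ · b)`
(the right-hand side being the image of `Δ(h)` under `h₁ ⊗ h₂ ↦ (h₁ · a)(h₂ · b)`). -/
def IsModuleAlgebra (act : H →ₗ[k] R →ₗ[k] R) : Prop :=
  (∀ r : R, act 1 r = r) ∧
  (∀ (g h : H) (r : R), act (g * h) r = act g (act h r)) ∧
  (∀ (h : H) (a b : R),
    act h (a * b) =
      LinearMap.mul' k R
        (TensorProduct.map (act.flip a) (act.flip b) (Coalgebra.comul h)))

/-- `a` is `H`-(von Neumann) regular with middle factors taken from the set `S`: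
`a = ∑ᵢ (hᵢ · a) bᵢ (hᵢ' · a)` with all `bᵢ ∈ S`. -/
def IsHRegularIn (act : H →ₗ[k] R →ₗ[k] R) (S : Set R) (a : R) : Prop :=
  ∃ (n : ℕ) (h h' : Fin n → H) (b : Fin n → R),
    (∀ i, b i ∈ S) ∧ a = ∑ i, act (h i) a * b i * act (h' i) a

/-- `J` is an `H`-ideal of the `H`-module (sub)algebra `S` (take `S = Set.univ`
for `H`-ideals of `R` itself). -/
def IsHIdealIn (act : H →ₗ[k] R →ₗ[k] R) (S J : Set R) : Prop :=
  J ⊆ S ∧ (0 : R) ∈ J ∧ (∀ x ∈ J, ∀ y ∈ J, x - y ∈ J) ∧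
  (∀ (c : k), ∀ x ∈ J, c • x ∈ J) ∧
  (∀ s ∈ S, ∀ x ∈ J, s * x ∈ J ∧ x * s ∈ J) ∧
  (∀ (h : H), ∀ x ∈ J, act h x ∈ J)

/-- The `H`-ideal of `S` generated by `a`. -/
def HIdealGenIn (act : H →ₗ[k] R →ₗ[k] R) (S : Set R) (a : R) : Set R :=
  {x | ∀ J : Set R, IsHIdealIn act S J → a ∈ J → x ∈ J}

/-- The `H`-von Neumann regular radical `r_{Hn}` of the `H`-module (sub)algebra `S`:
those `a ∈ S` such that every element of the `H`-ideal of `S` generated by `a`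
is `H`-regular in `S`. -/
def rHnIn (act : H →ₗ[k] R →ₗ[k] R) (S : Set R) : Set R :=
  {a | a ∈ S ∧ ∀ x ∈ HIdealGenIn act S a, IsHRegularIn act S x}

section aux
variable (act : H →ₗ[k] R →ₗ[k] R)

/-- The additive group of H-regular expressions in `a`. -/
def Reg (a : R) : AddSubgroup R where
  carrier := {z | ∃ (n : ℕ) (h h' : Fin n → H) (b : Fin n → R),
    z = ∑ i, act (h i) a * b i * act (h' i) a}
  zero_mem' := ⟨0, ![], ![], ![], by simp⟩
  add_mem' := by
    rintro x y ⟨n, h, h', b, rfl⟩ ⟨m, g, g', c, rfl⟩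
    exact ⟨n + m, Fin.append h g, Fin.append h' g', Fin.append b c, by
      rw [Fin.sum_univ_add]
      simp [Fin.append_left, Fin.append_right]⟩
  neg_mem' := by
    rintro x ⟨n, h, h', b, rfl⟩
    exact ⟨n, h, h', fun i => -(b i), by simp [Finset.sum_neg_distrib]⟩

lemma reg_gen (a : R) (g g' : H) (b : R) : act g a * b * act g' a ∈ Reg act a :=
  ⟨1, ![g], ![g'], ![b], by simp⟩

/-- Left factors: sums of `act h a` and `act h a * r`. -/
def Lgrp (a : R) : AddSubgroup R :=
  AddSubgroup.closure {y | (∃ h : H, y = act h a) ∨ ∃ (h : H) (r : R), y = act h a * r}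

/-- Right factors: sums of `r * act h a`. -/
def Rgrp (a : R) : AddSubgroup R :=
  AddSubgroup.closure {y | ∃ (h : H) (r : R), y = r * act h a}

variable {act}

lemma act_mul_rep (hma : IsModuleAlgebra act) (g : H) (p q : R) :
    ∃ S : Finset (H × H), act g (p * q) = ∑ z ∈ S, act z.1 p * act z.2 q := by
  obtain ⟨S, hS⟩ := TensorProduct.exists_finset (Coalgebra.comul (R := k) g)
  refine ⟨S, ?_⟩
  rw [hma.2.2, hS, map_sum, map_sum]
  simp [TensorProduct.map_tmul, LinearMap.mul'_apply]

lemma reg_act (hma : IsModuleAlgebra act) {a z : R} (hz : z ∈ Reg act a) (g : H) :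
    act g z ∈ Reg act a := by
  obtain ⟨n, h, h', b, rfl⟩ := hz
  rw [map_sum]
  refine sum_mem fun i _ => ?_
  obtain ⟨S, hS⟩ := act_mul_rep hma g (act (h i) a * b i) (act (h' i) a)
  rw [hS]
  refine sum_mem fun z _ => ?_
  obtain ⟨S2, hS2⟩ := act_mul_rep hma z.1 (act (h i) a) (b i)
  rw [hS2, Finset.sum_mul]
  refine sum_mem fun w _ => ?_
  rw [← hma.2.1, ← hma.2.1]
  exact reg_gen act a _ _ _

lemma mem_Lgrp_act (a : R) (g : H) : act g a ∈ Lgrp act a :=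
  AddSubgroup.subset_closure (Or.inl ⟨g, rfl⟩)

lemma mem_Lgrp_mul (a : R) (g : H) (r : R) : act g a * r ∈ Lgrp act a :=
  AddSubgroup.subset_closure (Or.inr ⟨g, r, rfl⟩)

lemma mem_Rgrp_mul (a : R) (g : H) (r : R) : r * act g a ∈ Rgrp act a :=
  AddSubgroup.subset_closure ⟨g, r, rfl⟩

lemma Lgrp_mul_right {a s : R} (hs : s ∈ Lgrp act a) (r : R) : s * r ∈ Lgrp act a := by
  induction hs using AddSubgroup.closure_induction with
  | mem x hx =>
    rcases hx with ⟨h, rfl⟩ | ⟨h, r', rfl⟩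
    · exact mem_Lgrp_mul a h r
    · rw [mul_assoc]; exact mem_Lgrp_mul a h _
  | zero => rw [zero_mul]; exact zero_mem _
  | add x y _ _ hx hy => rw [add_mul]; exact add_mem hx hy
  | neg x _ hx => rw [neg_mul]; exact neg_mem hx

lemma Rgrp_mul_left {a t : R} (ht : t ∈ Rgrp act a) (r : R) : r * t ∈ Rgrp act a := by
  induction ht using AddSubgroup.closure_induction with
  | mem x hx =>
    obtain ⟨h, r', rfl⟩ := hx
    rw [← mul_assoc]; exact mem_Rgrp_mul a h _
  | zero => rw [mul_zero]; exact zero_mem _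
  | add x y _ _ hx hy => rw [mul_add]; exact add_mem hx hy
  | neg x _ hx => rw [mul_neg]; exact neg_mem hx

lemma Lgrp_act (hma : IsModuleAlgebra act) {a s : R} (hs : s ∈ Lgrp act a) (g : H) :
    act g s ∈ Lgrp act a := by
  induction hs using AddSubgroup.closure_induction with
  | mem x hx =>
    rcases hx with ⟨h, rfl⟩ | ⟨h, r, rfl⟩
    · rw [← hma.2.1]; exact mem_Lgrp_act a _
    · obtain ⟨S, hS⟩ := act_mul_rep hma g (act h a) r
      rw [hS]
      refine sum_mem fun z _ => ?_
      rw [← hma.2.1]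
      exact mem_Lgrp_mul a _ _
  | zero => rw [map_zero]; exact zero_mem _
  | add x y _ _ hx hy => rw [map_add]; exact add_mem hx hy
  | neg x _ hx => rw [map_neg]; exact neg_mem hx

lemma Rgrp_act (hma : IsModuleAlgebra act) {a t : R} (ht : t ∈ Rgrp act a) (g : H) :
    act g t ∈ Rgrp act a := by
  induction ht using AddSubgroup.closure_induction with
  | mem x hx =>
    obtain ⟨h, r, rfl⟩ := hx
    obtain ⟨S, hS⟩ := act_mul_rep hma g r (act h a)
    rw [hS]
    refine sum_mem fun z _ => ?_
    rw [← hma.2.1]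
    exact mem_Rgrp_mul a _ _
  | zero => rw [map_zero]; exact zero_mem _
  | add x y _ _ hx hy => rw [map_add]; exact add_mem hx hy
  | neg x _ hx => rw [map_neg]; exact neg_mem hx

lemma Reg_le_Lgrp {a z : R} (hz : z ∈ Reg act a) : z ∈ Lgrp act a := by
  obtain ⟨n, h, h', b, rfl⟩ := hz
  refine sum_mem fun i _ => ?_
  rw [mul_assoc]
  exact mem_Lgrp_mul a _ _

lemma Reg_le_Rgrp {a z : R} (hz : z ∈ Reg act a) : z ∈ Rgrp act a := by
  obtain ⟨n, h, h', b, rfl⟩ := hz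
  exact sum_mem fun i _ => mem_Rgrp_mul a _ _

lemma Lgrp_mul_Rgrp {a s t : R} (hs : s ∈ Lgrp act a) (ht : t ∈ Rgrp act a) :
    s * t ∈ Reg act a := by
  induction hs using AddSubgroup.closure_induction with
  | mem x hx =>
    induction ht using AddSubgroup.closure_induction with
    | mem y hy =>
      obtain ⟨h', r, rfl⟩ := hy
      rcases hx with ⟨h, rfl⟩ | ⟨h, r', rfl⟩
      · rw [← mul_assoc]; exact reg_gen act a _ _ _
      · simpa only [mul_assoc] using reg_gen act a h h' (r' * r)
    | zero => rw [mul_zero]; exact zero_mem _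
    | add y z _ _ hy hz => rw [mul_add]; exact add_mem hy hz
    | neg y _ hy => rw [mul_neg]; exact neg_mem hy
  | zero => rw [zero_mul]; exact zero_mem _
  | add x y _ _ hx hy => rw [add_mul]; exact add_mem hx hy
  | neg x _ hx => rw [neg_mul]; exact neg_mem hx

/-! ### Generated H-ideals -/

lemma mem_gen_self (a : R) : a ∈ HIdealGenIn act Set.univ a := fun _ _ h => h

lemma gen_mono {a b : R} (hb : b ∈ HIdealGenIn act Set.univ a) :
    HIdealGenIn act Set.univ b ⊆ HIdealGenIn act Set.univ a :=
  fun _ hx J hJ haJ => hx J hJ (hb J hJ haJ)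

lemma hideal_add {J : Set R} (hJ : IsHIdealIn act Set.univ J) {x y : R}
    (hx : x ∈ J) (hy : y ∈ J) : x + y ∈ J := by
  have := hJ.2.2.1 x hx (0 - y) (hJ.2.2.1 0 hJ.2.1 y hy)
  simpa [sub_sub_eq_add_sub] using this

lemma hideal_sum {J : Set R} (hJ : IsHIdealIn act Set.univ J) {n : ℕ}
    {f : Fin n → R} (hf : ∀ i, f i ∈ J) : ∑ i, f i ∈ J := by
  classical
  induction n with
  | zero => simpa using hJ.2.1
  | succ m ih =>
    rw [Fin.sum_univ_castSucc]
    exact hideal_add hJ (ih fun i => hf _) (hf _)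

lemma gen_hideal (a : R) : IsHIdealIn act Set.univ (HIdealGenIn act Set.univ a) := by
  refine ⟨fun x _ => trivial, fun J hJ _ => hJ.2.1, ?_, ?_, ?_, ?_⟩
  · intro x hx y hy J hJ haJ
    exact hJ.2.2.1 x (hx J hJ haJ) y (hy J hJ haJ)
  · intro c x hx J hJ haJ
    exact hJ.2.2.2.1 c x (hx J hJ haJ)
  · intro s _ x hx
    exact ⟨fun J hJ haJ => (hJ.2.2.2.2.1 s trivial x (hx J hJ haJ)).1,
      fun J hJ haJ => (hJ.2.2.2.2.1 s trivial x (hx J hJ haJ)).2⟩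
  · intro h x hx J hJ haJ
    exact hJ.2.2.2.2.2 h x (hx J hJ haJ)

lemma mem_rHn_of_gen {a b : R} (ha : a ∈ rHnIn act Set.univ)
    (hb : b ∈ HIdealGenIn act Set.univ a) : b ∈ rHnIn act Set.univ :=
  ⟨trivial, fun x hx => ha.2 x (gen_mono hb hx)⟩

lemma reg_isHRegular {x : R} (hx : x ∈ Reg act x) : IsHRegularIn act Set.univ x := by
  obtain ⟨n, h, h', b, hrep⟩ := hx
  exact ⟨n, h, h', b, fun _ => trivial, hrep⟩

/-- The key subtraction lemma. -/
lemma rHn_sub (hma : IsModuleAlgebra act) {a b : R} (ha : a ∈ rHnIn act Set.univ)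
    (hb : b ∈ rHnIn act Set.univ) : a - b ∈ rHnIn act Set.univ := by
  classical
  refine ⟨trivial, fun x hx => ?_⟩
  -- the sum ideal
  set D : Set R := {z | ∃ u ∈ HIdealGenIn act Set.univ a, ∃ v ∈ HIdealGenIn act Set.univ b,
    z = u + v} with hD
  have hGa := gen_hideal (act := act) a
  have hGb := gen_hideal (act := act) b
  have hDideal : IsHIdealIn act Set.univ D := by
    refine ⟨fun _ _ => trivial, ⟨0, hGa.2.1, 0, hGb.2.1, by simp⟩, ?_, ?_, ?_, ?_⟩
    · rintro _ ⟨u, hu, v, hv, rfl⟩ _ ⟨u', hu', v', hv', rfl⟩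
      exact ⟨u - u', hGa.2.2.1 u hu u' hu', v - v', hGb.2.2.1 v hv v' hv', by abel⟩
    · rintro c _ ⟨u, hu, v, hv, rfl⟩
      exact ⟨c • u, hGa.2.2.2.1 c u hu, c • v, hGb.2.2.2.1 c v hv, by rw [smul_add]⟩
    · rintro s _ _ ⟨u, hu, v, hv, rfl⟩
      exact ⟨⟨s * u, (hGa.2.2.2.2.1 s trivial u hu).1, s * v, (hGb.2.2.2.2.1 s trivial v hv).1,
          by rw [mul_add]⟩,
        ⟨u * s, (hGa.2.2.2.2.1 s trivial u hu).2, v * s, (hGb.2.2.2.2.1 s trivial v hv).2,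
          by rw [add_mul]⟩⟩
    · rintro g _ ⟨u, hu, v, hv, rfl⟩
      exact ⟨act g u, hGa.2.2.2.2.2 g u hu, act g v, hGb.2.2.2.2.2 g v hv, by rw [map_add]⟩
  have habD : a - b ∈ D :=
    ⟨a, mem_gen_self a, -b, by simpa using hGb.2.2.1 0 hGb.2.1 b (mem_gen_self b),
      by rw [sub_eq_add_neg]⟩
  obtain ⟨u, hu, v, hv, hxuv⟩ := hx D hDideal habD
  -- u is H-regular
  obtain ⟨n, h, h', c, -, hu_rep⟩ := ha.2 u hu
  -- w : the candidate regular part of x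
  set w : R := ∑ i, act (h i) x * c i * act (h' i) x with hw
  have hwReg : w ∈ Reg act x := ⟨n, h, h', c, rfl⟩
  -- x - w lies in the ideal generated by b
  have hxw : x - w ∈ HIdealGenIn act Set.univ b := by
    have key : x - w = v - ∑ i, (act (h i) u * c i * act (h' i) v
        + act (h i) v * c i * act (h' i) x) := by
      have hterm : ∀ i, act (h i) x * c i * act (h' i) x
          = act (h i) u * c i * act (h' i) u
            + (act (h i) u * c i * act (h' i) v + act (h i) v * c i * act (h' i) x) := by
        intro i
        have e1 : act (h i) x = act (h i) u + act (h i) v := by rw [hxuv, map_add]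
        have e2 : act (h' i) x = act (h' i) u + act (h' i) v := by rw [hxuv, map_add]
        rw [e1, e2]
        simp only [add_mul, mul_add]
        abel
      calc x - w = (u + v) - w := by rw [← hxuv]
        _ = (u + v) - ∑ i, act (h i) x * c i * act (h' i) x := by rw [hw]
        _ = (u + v) - (∑ i, act (h i) u * c i * act (h' i) u
              + ∑ i, (act (h i) u * c i * act (h' i) v
                + act (h i) v * c i * act (h' i) x)) := by
            rw [Finset.sum_congr rfl fun i _ => hterm i, Finset.sum_add_distrib]
        _ = _ := by rw [← hu_rep]; abel
    rw [key]
    refine hGb.2.2.1 v hv _ (hideal_sum hGb fun i => ?_)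
    refine hideal_add hGb ?_ ?_
    · exact (hGb.2.2.2.2.1 (act (h i) u * c i) trivial _
        (hGb.2.2.2.2.2 (h' i) v hv)).1
    · exact (hGb.2.2.2.2.1 (act (h' i) x) trivial _
        (hGb.2.2.2.2.1 (c i) trivial _ (hGb.2.2.2.2.2 (h i) v hv)).2).2
  -- hence x - w is H-regular
  obtain ⟨m, g, g', d, -, hy_rep⟩ := hb.2 (x - w) hxw
  -- conclude x ∈ Reg x
  refine reg_isHRegular ?_
  have hmem : w + (x - w) ∈ Reg act x := by
    refine add_mem hwReg ?_
    rw [hy_rep]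
    refine sum_mem fun j _ => ?_
    have hL : act (g j) (x - w) ∈ Lgrp act x := by
      rw [map_sub]
      exact sub_mem (mem_Lgrp_act x (g j)) (Lgrp_act hma (Reg_le_Lgrp hwReg) (g j))
    have hR : d j * act (g' j) (x - w) ∈ Rgrp act x := by
      rw [map_sub, mul_sub]
      exact sub_mem (mem_Rgrp_mul x (g' j) (d j))
        (Rgrp_mul_left (Rgrp_act hma (Reg_le_Rgrp hwReg) (g' j)) (d j))
    rw [mul_assoc]
    exact Lgrp_mul_Rgrp hL hR
  simpa using hmem

end aux

theorem rHn_isHIdeal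
    (act : H →ₗ[k] R →ₗ[k] R) (hma : IsModuleAlgebra act) :
    IsHIdealIn act Set.univ (rHnIn act Set.univ) ∧
    (∀ a ∈ rHnIn act Set.univ, ∀ b ∈ rHnIn act Set.univ, a - b ∈ rHnIn act Set.univ) ∧
    (∀ r : R, ∀ a ∈ rHnIn act Set.univ, r * a ∈ rHnIn act Set.univ) ∧
    (∀ r : R, ∀ a ∈ rHnIn act Set.univ, a * r ∈ rHnIn act Set.univ) ∧
    (∀ h : H, ∀ a ∈ rHnIn act Set.univ, act h a ∈ rHnIn act Set.univ) := by
  have hzero : (0 : R) ∈ rHnIn act Set.univ := by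
    refine ⟨trivial, fun x hx => ?_⟩
    have h0 : IsHIdealIn act Set.univ {(0 : R)} := by
      refine ⟨fun _ _ => trivial, rfl, ?_, ?_, ?_, ?_⟩
      · rintro x rfl y rfl; simp
      · rintro c x rfl; simp
      · rintro s _ x rfl; simp
      · rintro h x rfl; simp
    have hx0 : x = 0 := hx {0} h0 rfl
    exact ⟨0, ![], ![], ![], fun i => trivial, by simp [hx0]⟩
  have hmulL : ∀ r : R, ∀ a ∈ rHnIn act Set.univ, r * a ∈ rHnIn act Set.univ := by
    intro r a ha
    exact mem_rHn_of_gen ha fun J hJ haJ => (hJ.2.2.2.2.1 r trivial a haJ).1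
  have hmulR : ∀ r : R, ∀ a ∈ rHnIn act Set.univ, a * r ∈ rHnIn act Set.univ := by
    intro r a ha
    exact mem_rHn_of_gen ha fun J hJ haJ => (hJ.2.2.2.2.1 r trivial a haJ).2
  have hact : ∀ h : H, ∀ a ∈ rHnIn act Set.univ, act h a ∈ rHnIn act Set.univ := by
    intro h a ha
    exact mem_rHn_of_gen ha fun J hJ haJ => hJ.2.2.2.2.2 h a haJ
  refine ⟨⟨fun _ _ => trivial, hzero, fun a ha b hb => rHn_sub hma ha hb,
      ?_, fun s _ a ha => ⟨hmulL s a ha, hmulR s a ha⟩, fun h a ha => hact h a ha⟩,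
    fun a ha b hb => rHn_sub hma ha hb, hmulL, hmulR, hact⟩
  intro c a ha
  exact mem_rHn_of_gen ha fun J hJ haJ => hJ.2.2.2.1 c a haJ
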